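/- For every nonnegative integer n, the shifted Hankel determinant d_2(n,t) = \det( M_{2+i+j}(t) )_{i,j=0}^{n-1} equals \sum_{j=0}^{n} F_j(t)^2 minus the correction for n = 0, i.e. d_2(0,t) = 1 and for n \geq 1, d_2(n,t) = \sum_{j=0}^{n} F_j(t)^2. -/
import Mathlib


open Polynomial Matrix

/-- The weight polynomials `M_{n,k}(t)` of Motzkin paths from `(0,0)` to `(n,k)`. -/
noncomputable def motzkinPoly : ℕ → ℤ → Polynomial ℤ
  | 0, k => if k = 0 then 1 else 0
  | n + 1, k =>
      if k < 0 then 0 else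
        motzkinPoly n (k - 1) + X * motzkinPoly n k + motzkinPoly n (k + 1)
  termination_by n _ => n


/-- The Fibonacci polynomials: `F_0 = 1`, `F_1 = t`, `F_n = t·F_{n-1} - F_{n-2}`. -/
noncomputable def fibPoly : ℕ → Polynomial ℤ
  | 0 => 1
  | 1 => X
  | n + 2 => X * fibPoly (n + 1) - fibPoly n

/-- abbreviation with natural second index -/
noncomputable def mp (n k : ℕ) : Polynomial ℤ := motzkinPoly n (k : ℤ)

lemma motzkinPoly_neg (n : ℕ) (k : ℤ) (hk : k < 0) : motzkinPoly n k = 0 := by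
  cases n with
  | zero => simp [motzkinPoly, hk.ne]
  | succ n => simp [motzkinPoly, hk]

lemma mp_zero (k : ℕ) : mp 0 k = if k = 0 then 1 else 0 := by
  simp [mp, motzkinPoly]

lemma mp_rec0 (n : ℕ) : mp (n+1) 0 = X * mp n 0 + mp n 1 := by
  have h : motzkinPoly n (-1) = 0 := motzkinPoly_neg n (-1) (by norm_num)
  simp only [mp, motzkinPoly]
  norm_num [h]

lemma mp_rec (n k : ℕ) : mp (n+1) (k+1) = mp n k + X * mp n (k+1) + mp n (k+2) := by
  show motzkinPoly (n+1) ((k:ℤ)+1) = _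
  rw [motzkinPoly]
  have h : ¬ ((k:ℤ)+1 < 0) := by omega
  rw [if_neg h]
  have e1 : (k:ℤ)+1-1 = (k:ℤ) := by ring
  have e2 : (k:ℤ)+1+1 = ((k+2:ℕ):ℤ) := by push_cast; ring
  rw [e1, e2]
  rfl

lemma mp_eq_zero_of_lt : ∀ n k : ℕ, n < k → mp n k = 0 := by
  intro n
  induction n with
  | zero => intro k hk; rw [mp_zero, if_neg (by omega : ¬ k = 0)]
  | succ n ih =>
    intro k hk
    obtain ⟨k, rfl⟩ : ∃ m, k = m + 1 := ⟨k-1, by omega⟩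
    rw [mp_rec]
    rw [ih k (by omega), ih (k+1) (by omega), ih (k+2) (by omega)]
    ring

lemma mp_diag : ∀ n : ℕ, mp n n = 1 := by
  intro n
  induction n with
  | zero => simp [mp_zero]
  | succ n ih =>
    rw [mp_rec, ih, mp_eq_zero_of_lt n (n+1) (by omega), mp_eq_zero_of_lt n (n+2) (by omega)]
    ring

open Finset in
lemma mp_key (m n N : ℕ) (hm : m < N) :
    ∑ k ∈ Finset.range N, mp m k * mp (n+1) k
      = X * ∑ k ∈ Finset.range N, mp m k * mp n k
        + ∑ k ∈ Finset.range N, mp m (k+1) * mp n k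
        + ∑ k ∈ Finset.range N, mp m k * mp n (k+1) := by
  obtain ⟨N, rfl⟩ : ∃ N', N = N' + 1 := ⟨N-1, by omega⟩
  rw [Finset.sum_range_succ' (fun k => mp m k * mp (n+1) k)]
  rw [Finset.sum_range_succ' (fun k => mp m k * mp n k)]
  rw [Finset.sum_range_succ (fun k => mp m (k+1) * mp n k)]
  rw [Finset.sum_range_succ' (fun k => mp m k * mp n (k+1))]
  rw [mp_eq_zero_of_lt m (N+1) (by omega)]
  simp only [mp_rec, mp_rec0]
  have e1 : ∀ k, mp m (k+1) * (mp n k + X * mp n (k+1) + mp n (k+2))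
      = mp m (k+1) * mp n k + X * (mp m (k+1) * mp n (k+1)) + mp m (k+1) * mp n (k+2) :=
    fun k => by ring
  simp only [e1, Finset.sum_add_distrib, ← Finset.mul_sum]
  ring

lemma mp_swap (m n N : ℕ) (hm : m < N) (hn : n < N) :
    ∑ k ∈ Finset.range N, mp m k * mp (n+1) k
      = ∑ k ∈ Finset.range N, mp (m+1) k * mp n k := by
  have h1 := mp_key m n N hm
  have h2 := mp_key n m N hn
  have c1 : ∑ k ∈ Finset.range N, mp (m+1) k * mp n k
      = ∑ k ∈ Finset.range N, mp n k * mp (m+1) k :=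
    Finset.sum_congr rfl (fun k _ => mul_comm _ _)
  rw [h1, c1, h2]
  have c2 : ∑ k ∈ Finset.range N, mp n k * mp m k
      = ∑ k ∈ Finset.range N, mp m k * mp n k :=
    Finset.sum_congr rfl (fun k _ => mul_comm _ _)
  have c3 : ∑ k ∈ Finset.range N, mp n (k+1) * mp m k
      = ∑ k ∈ Finset.range N, mp m k * mp n (k+1) :=
    Finset.sum_congr rfl (fun k _ => mul_comm _ _)
  have c4 : ∑ k ∈ Finset.range N, mp n k * mp m (k+1)
      = ∑ k ∈ Finset.range N, mp m (k+1) * mp n k :=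
    Finset.sum_congr rfl (fun k _ => mul_comm _ _)
  rw [c2, c3, c4]
  ring

lemma mp_prod : ∀ n m N : ℕ, m + n < N →
    mp (m+n) 0 = ∑ k ∈ Finset.range N, mp m k * mp n k := by
  intro n
  induction n with
  | zero =>
    intro m N hN
    rw [Finset.sum_eq_single 0]
    · simp [mp_zero]
    · intro k _ hk
      rw [mp_zero, if_neg hk, mul_zero]
    · intro h
      exact absurd (Finset.mem_range.mpr (by omega)) h
  | succ n ih =>
    intro m N hN
    rw [mp_swap m n N (by omega) (by omega), ← ih (m+1) N (by omega)]
    congr 1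
    omega

/-- ℕ-indexed tridiagonal entry -/
noncomputable def Jf (l k : ℕ) : Polynomial ℤ :=
  if l = k then X else if l + 1 = k ∨ k + 1 = l then 1 else 0

noncomputable def Amat (n : ℕ) : Matrix (Fin n) (Fin n) (Polynomial ℤ) :=
  Matrix.of fun i k => mp i k

noncomputable def Jmat (n : ℕ) : Matrix (Fin n) (Fin n) (Polynomial ℤ) :=
  Matrix.of fun i j => Jf i j

noncomputable def Emat (n : ℕ) : Matrix (Fin (n+1)) (Fin (n+1)) (Polynomial ℤ) :=
  Matrix.of fun i j => if i = Fin.last n ∧ j = Fin.last n then 1 else 0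

noncomputable def Kmat (n : ℕ) : Matrix (Fin (n+1)) (Fin (n+1)) (Polynomial ℤ) :=
  Jmat (n+1) * Jmat (n+1) + Emat n

lemma sumJ0 (i N : ℕ) (hN : 1 < N) :
    ∑ l ∈ Finset.range N, mp i l * Jf l 0 = X * mp i 0 + mp i 1 := by
  have hsplit : ∀ l : ℕ, mp i l * Jf l 0
      = (if l = 0 then mp i l * X else 0) + (if l = 1 then mp i l else 0) := by
    intro l
    unfold Jf
    rcases l with _ | _ | l
    · rw [if_pos rfl, if_pos rfl, if_neg (by omega)]
      ring
    · rw [if_neg (by omega), if_pos (Or.inr rfl), if_neg (by omega), if_pos rfl]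
      ring
    · rw [if_neg (by omega), if_neg (by omega), if_neg (by omega), if_neg (by omega)]
      ring
  simp only [hsplit, Finset.sum_add_distrib, Finset.sum_ite_eq' (Finset.range N)]
  rw [if_pos (Finset.mem_range.mpr (by omega)), if_pos (Finset.mem_range.mpr hN)]
  ring

lemma sumJS (i k N : ℕ) (hN : k + 2 < N) :
    ∑ l ∈ Finset.range N, mp i l * Jf l (k+1)
      = mp i k + X * mp i (k+1) + mp i (k+2) := by
  have hsplit : ∀ l : ℕ, mp i l * Jf l (k+1)
      = (if l = k then mp i l else 0) + (if l = k+1 then mp i l * X else 0)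
        + (if l = k+2 then mp i l else 0) := by
    intro l
    unfold Jf
    split_ifs <;> first | (exfalso; omega) | ring | simp_all
  simp only [hsplit, Finset.sum_add_distrib, Finset.sum_ite_eq' (Finset.range N)]
  rw [if_pos (Finset.mem_range.mpr (by omega)), if_pos (Finset.mem_range.mpr (by omega)),
    if_pos (Finset.mem_range.mpr (by omega))]
  ring

lemma sumJ (i k n : ℕ) (hi : i < n) (hk : k < n) :
    ∑ l ∈ Finset.range n, mp i l * Jf l k = mp (i+1) k := by
  have hext : ∑ l ∈ Finset.range n, mp i l * Jf l k
      = ∑ l ∈ Finset.range (n+2), mp i l * Jf l k := by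
    apply Finset.sum_subset (Finset.range_subset_range.mpr (by omega))
    intro l _ hl
    rw [mp_eq_zero_of_lt i l (by simp at hl ⊢; omega), zero_mul]
  rw [hext]
  rcases k with _ | k
  · rw [sumJ0 i (n+2) (by omega), mp_rec0]
  · rw [sumJS i k (n+2) (by omega), mp_rec]

lemma B_eq (n : ℕ) :
    Amat n * Jmat n = Matrix.of (fun i k : Fin n => mp (i+1) k) := by
  apply Matrix.ext
  intro i k
  rw [Matrix.mul_apply]
  show (∑ l : Fin n, mp i l * Jf l k) = _
  rw [Fin.sum_univ_eq_sum_range (fun l => mp i l * Jf l k)]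
  exact (sumJ i k n i.isLt k.isLt).trans rfl

lemma mp_last (n : ℕ) (i : Fin (n+1)) : mp i n = if i = Fin.last n then 1 else 0 := by
  split_ifs with h
  · have : (i : ℕ) = n := by rw [h]; rfl
    rw [this]; exact mp_diag n
  · refine mp_eq_zero_of_lt i n ?_
    have h1 : (i : ℕ) ≤ n := Nat.lt_succ_iff.mp i.isLt
    have h2 : (i : ℕ) ≠ n := fun hc => h (Fin.ext (by rw [hc]; rfl))
    omega

lemma H2_entry (n : ℕ) (i j : Fin (n+1)) :
    motzkinPoly (2 + (i : ℕ) + (j : ℕ)) 0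
      = (∑ k : Fin (n+1), mp ((i : ℕ)+1) k * mp ((j : ℕ)+1) k) + Emat n i j := by
  have h0 : motzkinPoly (2 + (i : ℕ) + (j : ℕ)) 0 = mp (((i:ℕ)+1) + ((j:ℕ)+1)) 0 := by
    unfold mp
    norm_num
    congr 1
    omega
  rw [h0, mp_prod ((j:ℕ)+1) ((i:ℕ)+1) (2*n+4)
    (by have := i.isLt; have := j.isLt; omega)]
  have hshrink : ∑ k ∈ Finset.range (2*n+4), mp ((i:ℕ)+1) k * mp ((j:ℕ)+1) k
      = ∑ k ∈ Finset.range (n+2), mp ((i:ℕ)+1) k * mp ((j:ℕ)+1) k := by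
    symm
    apply Finset.sum_subset (Finset.range_subset_range.mpr (by omega))
    intro k _ hk
    rw [mp_eq_zero_of_lt ((i:ℕ)+1) k (by simp at hk ⊢; have := i.isLt; omega), zero_mul]
  rw [hshrink, Finset.sum_range_succ]
  congr 1
  · rw [← Fin.sum_univ_eq_sum_range (fun k => mp ((i:ℕ)+1) k * mp ((j:ℕ)+1) k)]
  · have hi : mp ((i:ℕ)+1) (n+1) = if i = Fin.last n then 1 else 0 := by
      split_ifs with h
      · have : (i : ℕ) + 1 = n + 1 := by rw [h]; rfl
        rw [this]; exact mp_diag (n+1)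
      · refine mp_eq_zero_of_lt _ _ ?_
        have h1 : (i : ℕ) ≤ n := Nat.lt_succ_iff.mp i.isLt
        have h2 : (i : ℕ) ≠ n := fun hc => h (Fin.ext (by rw [hc]; rfl))
        omega
    have hj : mp ((j:ℕ)+1) (n+1) = if j = Fin.last n then 1 else 0 := by
      split_ifs with h
      · have : (j : ℕ) + 1 = n + 1 := by rw [h]; rfl
        rw [this]; exact mp_diag (n+1)
      · refine mp_eq_zero_of_lt _ _ ?_
        have h1 : (j : ℕ) ≤ n := Nat.lt_succ_iff.mp j.isLt
        have h2 : (j : ℕ) ≠ n := fun hc => h (Fin.ext (by rw [hc]; rfl))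
        omega
    rw [hi, hj]
    show _ = if i = Fin.last n ∧ j = Fin.last n then (1 : Polynomial ℤ) else 0
    split_ifs with h1 h2 h3 <;> simp_all

lemma Jmat_symm (n : ℕ) : (Jmat n)ᵀ = Jmat n := by
  apply Matrix.ext; intro i j
  show Jf (j : ℕ) (i : ℕ) = Jf (i : ℕ) (j : ℕ)
  unfold Jf
  split_ifs <;> first | rfl | (exfalso; omega)

lemma detA (n : ℕ) : (Amat n).det = 1 := by
  rw [Matrix.det_of_lowerTriangular (Amat n)
    (fun i j hij => mp_eq_zero_of_lt i j (by exact hij))]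
  rw [Finset.prod_eq_one]
  intro i _
  exact mp_diag i

lemma AE (n : ℕ) : Amat (n+1) * Emat n = Emat n := by
  apply Matrix.ext; intro i j
  rw [Matrix.mul_apply, Finset.sum_eq_single (Fin.last n)]
  · show mp i ((Fin.last n : Fin (n+1)) : ℕ) *
        (if Fin.last n = Fin.last n ∧ j = Fin.last n then 1 else 0) = Emat n i j
    rw [Fin.val_last, mp_last]
    show _ = if i = Fin.last n ∧ j = Fin.last n then (1 : Polynomial ℤ) else 0
    split_ifs <;> simp_all
  · intro k _ hk
    show mp i k * (if k = Fin.last n ∧ j = Fin.last n then 1 else 0) = 0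
    rw [if_neg (fun hc => hk hc.1), mul_zero]
  · intro h; exact absurd (Finset.mem_univ _) h

lemma EA (n : ℕ) : Emat n * (Amat (n+1))ᵀ = Emat n := by
  apply Matrix.ext; intro i j
  rw [Matrix.mul_apply, Finset.sum_eq_single (Fin.last n)]
  · show (if i = Fin.last n ∧ Fin.last n = Fin.last n then 1 else 0) *
        mp j ((Fin.last n : Fin (n+1)) : ℕ) = Emat n i j
    rw [Fin.val_last, mp_last]
    show _ = if i = Fin.last n ∧ j = Fin.last n then (1 : Polynomial ℤ) else 0
    split_ifs <;> simp_all
  · intro k _ hk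
    show (if i = Fin.last n ∧ k = Fin.last n then 1 else 0) * mp j k = 0
    rw [if_neg (fun hc => hk hc.2), zero_mul]
  · intro h; exact absurd (Finset.mem_univ _) h

lemma H_factor (n : ℕ) :
    Matrix.of (fun i j : Fin (n+1) => motzkinPoly (2 + (i : ℕ) + (j : ℕ)) 0)
      = Amat (n+1) * Kmat n * (Amat (n+1))ᵀ := by
  have h1 : Matrix.of (fun i j : Fin (n+1) => motzkinPoly (2 + (i : ℕ) + (j : ℕ)) 0)
      = (Amat (n+1) * Jmat (n+1)) * (Amat (n+1) * Jmat (n+1))ᵀ + Emat n := by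
    apply Matrix.ext; intro i j
    rw [Matrix.add_apply, Matrix.mul_apply]
    simp only [Matrix.transpose_apply, B_eq, Matrix.of_apply]
    exact H2_entry n i j
  rw [h1]
  rw [Matrix.transpose_mul, Jmat_symm]
  have h2 : Amat (n+1) * Jmat (n+1) * (Jmat (n+1) * (Amat (n+1))ᵀ)
      = Amat (n+1) * (Jmat (n+1) * Jmat (n+1)) * (Amat (n+1))ᵀ := by
    simp only [Matrix.mul_assoc]
  rw [h2]
  have h3 : Emat n = Amat (n+1) * Emat n * (Amat (n+1))ᵀ := by
    rw [AE, EA]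
  rw [h3]
  unfold Kmat
  rw [Matrix.mul_add, Matrix.add_mul]

lemma detH (n : ℕ) :
    Matrix.det (Matrix.of (fun i j : Fin (n+1) => motzkinPoly (2 + (i : ℕ) + (j : ℕ)) 0))
      = (Kmat n).det := by
  rw [H_factor, Matrix.det_mul, Matrix.det_mul, Matrix.det_transpose, detA]
  ring

lemma Jf_add (a i j : ℕ) : Jf (i+a) (j+a) = Jf i j := by
  unfold Jf
  split_ifs <;> first | (exfalso; omega) | rfl

lemma Jmat_sub_ss (n : ℕ) : (Jmat (n+2)).submatrix Fin.succ Fin.succ = Jmat (n+1) := by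
  apply Matrix.ext; intro i j
  show Jf ((i : ℕ)+1) ((j : ℕ)+1) = Jf i j
  exact Jf_add 1 i j

lemma detM1 (n : ℕ) :
    ((Jmat (n+2)).submatrix Fin.succ (Fin.succAbove 1)).det = (Jmat n).det := by
  rw [Matrix.det_succ_column_zero]
  rw [Finset.sum_eq_single (0 : Fin (n+1))]
  · have h0 : (1 : Fin (n+2)).succAbove 0 = 0 := by
      rw [Fin.succAbove_of_castSucc_lt]
      · rfl
      · simp [Fin.castSucc_zero]
    have hentry : (Jmat (n+2)).submatrix Fin.succ (Fin.succAbove 1) 0 0 = 1 := by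
      rw [Matrix.submatrix_apply, h0]
      show Jf ((Fin.succ (0 : Fin (n+1)) : Fin (n+2)) : ℕ) ((0 : Fin (n+2)) : ℕ) = 1
      norm_num [Jf]
    rw [hentry]
    have hsub : ((Jmat (n+2)).submatrix Fin.succ (Fin.succAbove 1)).submatrix
        (Fin.succAbove 0) Fin.succ = Jmat n := by
      rw [Matrix.submatrix_submatrix]
      apply Matrix.ext; intro i j
      rw [Matrix.submatrix_apply]
      have hg : (1 : Fin (n+2)).succAbove (Fin.succ j) = Fin.succ (Fin.succ j) := by
        apply Fin.succAbove_of_le_castSucc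
        rw [Fin.le_castSucc_iff]
        exact Fin.one_lt_succ_succ j
      have hf : (0 : Fin (n+1)).succAbove i = Fin.succ i := rfl
      rw [Function.comp, Function.comp, hf, hg]
      show Jf ((i : ℕ)+1+1) ((j : ℕ)+1+1) = Jf i j
      exact Jf_add 2 i j
    rw [hsub]
    simp
  · intro i _ hi
    have hentry : (Jmat (n+2)).submatrix Fin.succ (Fin.succAbove 1) i 0 = 0 := by
      rw [Matrix.submatrix_apply]
      have h0 : (1 : Fin (n+2)).succAbove 0 = 0 := by
        rw [Fin.succAbove_of_castSucc_lt]
        · rfl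
        · simp [Fin.castSucc_zero]
      rw [h0]
      show Jf ((i : ℕ)+1) ((0 : Fin (n+2)) : ℕ) = 0
      have hiv : (i : ℕ) ≠ 0 := fun hc => hi (Fin.ext hc)
      show Jf ((i : ℕ)+1) 0 = 0
      unfold Jf
      rw [if_neg (by omega), if_neg (by omega)]
    rw [hentry]
    ring
  · intro h; exact absurd (Finset.mem_univ _) h

lemma detJ : ∀ n : ℕ, (Jmat n).det = fibPoly n
  | 0 => by
      rw [Matrix.det_isEmpty]
      rfl
  | 1 => by
      rw [Matrix.det_fin_one]
      show Jf 0 0 = fibPoly 1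
      norm_num [Jf, fibPoly]
  | (n+2) => by
      rw [Matrix.det_succ_row_zero, Fin.sum_univ_succ, Fin.sum_univ_succ]
      have e0 : Jmat (n+2) 0 0 = X := by norm_num [Jmat, Jf]
      have e1 : Jmat (n+2) 0 (Fin.succ 0) = 1 := by
        show Jf ((0 : Fin (n+2)) : ℕ) ((Fin.succ (0 : Fin (n+1)) : Fin (n+2)) : ℕ) = 1
        norm_num [Jf]
      have erest : ∀ j : Fin n, Jmat (n+2) 0 (Fin.succ (Fin.succ j)) = 0 := by
        intro j
        show Jf ((0 : Fin (n+2)) : ℕ) ((j : ℕ)+1+1) = 0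
        show Jf 0 ((j : ℕ)+1+1) = 0
        unfold Jf
        rw [if_neg (by omega), if_neg (by omega)]
      rw [e0, e1]
      rw [Finset.sum_eq_zero (fun j _ => by rw [erest j]; ring)]
      rw [Fin.succAbove_zero, Jmat_sub_ss, detJ (n+1)]
      have hM1 : ((Jmat (n+2)).submatrix Fin.succ (Fin.succAbove (Fin.succ 0))).det
          = fibPoly n := by
        have : (Fin.succ (0 : Fin (n+1))) = (1 : Fin (n+2)) := rfl
        rw [this, detM1, detJ n]
      rw [hM1]
      have h0v : ((0 : Fin (n+2)) : ℕ) = 0 := rfl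
      have h1v : ((Fin.succ (0 : Fin (n+1))) : ℕ) = 1 := rfl
      rw [h0v, h1v]
      have hfib : fibPoly (n+2) = X * fibPoly (n+1) - fibPoly n := rfl
      rw [hfib]
      ring

lemma Jf_last_right (n : ℕ) (i : Fin (n+1)) :
    Jf (i : ℕ) (n+1) = if i = Fin.last n then 1 else 0 := by
  have hi : (i : ℕ) < n + 1 := i.isLt
  unfold Jf
  rw [if_neg (by omega)]
  split_ifs with h1 h2 h3
  · rfl
  · exfalso
    apply h2
    apply Fin.ext
    show (i : ℕ) = n
    omega
  · exfalso
    have : (i : ℕ) = n := by rw [h3]; rfl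
    omega
  · rfl

lemma subK (n : ℕ) :
    (Jmat (n+2) * Jmat (n+2)).submatrix Fin.castSucc Fin.castSucc = Kmat n := by
  apply Matrix.ext; intro i j
  rw [Matrix.submatrix_apply, Matrix.mul_apply, Fin.sum_univ_castSucc]
  show (∑ l : Fin (n+1),
      Jf ((Fin.castSucc i : Fin (n+2)) : ℕ) ((Fin.castSucc l : Fin (n+2)) : ℕ)
        * Jf ((Fin.castSucc l : Fin (n+2)) : ℕ) ((Fin.castSucc j : Fin (n+2)) : ℕ))
      + Jf ((Fin.castSucc i : Fin (n+2)) : ℕ) ((Fin.last (n+1) : Fin (n+2)) : ℕ)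
        * Jf ((Fin.last (n+1) : Fin (n+2)) : ℕ) ((Fin.castSucc j : Fin (n+2)) : ℕ)
      = Kmat n i j
  simp only [Fin.coe_castSucc, Fin.val_last]
  have hlast : Jf (i : ℕ) (n+1) * Jf (n+1) (j : ℕ) = Emat n i j := by
    have hji : Jf (n+1) (j : ℕ) = Jf (j : ℕ) (n+1) := by
      unfold Jf
      split_ifs <;> first | (exfalso; omega) | rfl
    rw [hji, Jf_last_right, Jf_last_right]
    show _ = if i = Fin.last n ∧ j = Fin.last n then (1 : Polynomial ℤ) else 0
    split_ifs <;> simp_all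
  rw [hlast]
  show _ = (Jmat (n+1) * Jmat (n+1)) i j + Emat n i j
  rw [Matrix.mul_apply]
  rfl

lemma detK : ∀ n : ℕ, (Kmat n).det = ∑ j ∈ Finset.range (n+2), fibPoly j ^ 2
  | 0 => by
      rw [Matrix.det_fin_one]
      show (Jmat 1 * Jmat 1) 0 0 + Emat 0 0 0 = _
      rw [Matrix.mul_apply]
      rw [Fin.sum_univ_one]
      show Jf 0 0 * Jf 0 0 + (if (0 : Fin 1) = Fin.last 0 ∧ (0 : Fin 1) = Fin.last 0
          then (1 : Polynomial ℤ) else 0) = _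
      rw [if_pos ⟨rfl, rfl⟩]
      show X * X + 1 = _
      rw [Finset.sum_range_succ, Finset.sum_range_succ, Finset.sum_range_zero]
      show X * X + 1 = 0 + (1 : Polynomial ℤ) ^ 2 + X ^ 2
      ring
  | (n+1) => by
      have hupd : Kmat (n+1) = (Jmat (n+2) * Jmat (n+2)).updateCol (Fin.last (n+1))
          ((fun i => (Jmat (n+2) * Jmat (n+2)) i (Fin.last (n+1)))
            + Pi.single (Fin.last (n+1)) 1) := by
        apply Matrix.ext; intro i j
        by_cases hj : j = Fin.last (n+1)
        · subst hj
          rw [Matrix.updateCol_apply, if_pos rfl]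
          have hE : Emat (n+1) i (Fin.last (n+1))
              = (Pi.single (Fin.last (n+1)) 1 : Fin (n+2) → Polynomial ℤ) i := by
            rw [Pi.single_apply]
            show (if i = Fin.last (n+1) ∧ Fin.last (n+1) = Fin.last (n+1)
              then (1 : Polynomial ℤ) else 0) = _
            split_ifs <;> simp_all
          show (Jmat (n+2) * Jmat (n+2)) i (Fin.last (n+1)) + Emat (n+1) i (Fin.last (n+1)) = _
          rw [hE]
          rfl
        · rw [Matrix.updateCol_apply, if_neg hj]
          show (Jmat (n+2) * Jmat (n+2)) i j + Emat (n+1) i j = _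
          have : Emat (n+1) i j = 0 := by
            show (if i = Fin.last (n+1) ∧ j = Fin.last (n+1) then (1 : Polynomial ℤ) else 0) = 0
            rw [if_neg (fun hc => hj hc.2)]
          rw [this, add_zero]
      rw [hupd, Matrix.det_updateCol_add, Matrix.updateCol_eq_self,
        Matrix.det_mul, detJ (n+2)]
      have h2 : ((Jmat (n+2) * Jmat (n+2)).updateCol (Fin.last (n+1))
          (Pi.single (Fin.last (n+1)) 1)).det = (Kmat n).det := by
        rw [Matrix.det_succ_column _ (Fin.last (n+1))]
        rw [Finset.sum_eq_single (Fin.last (n+1))]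
        · rw [Matrix.updateCol_apply, if_pos rfl, Pi.single_eq_same]
          have hsign : ((-1 : Polynomial ℤ)) ^ ((Fin.last (n+1) : ℕ) + (Fin.last (n+1) : ℕ))
              = 1 := by
            rw [Fin.val_last]
            exact Even.neg_one_pow ⟨n+1, by ring⟩
          rw [hsign]
          have hsub : ((Jmat (n+2) * Jmat (n+2)).updateCol (Fin.last (n+1))
              (Pi.single (Fin.last (n+1)) 1)).submatrix
                (Fin.last (n+1)).succAbove (Fin.last (n+1)).succAbove = Kmat n := by
            rw [Fin.succAbove_last]
            rw [← subK n]
            apply Matrix.ext; intro i j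
            rw [Matrix.submatrix_apply, Matrix.submatrix_apply,
              Matrix.updateCol_apply,
              if_neg (Fin.ne_of_lt (Fin.castSucc_lt_last j))]
          rw [hsub]
          ring
        · intro i _ hi
          rw [Matrix.updateCol_apply, if_pos rfl, Pi.single_eq_of_ne hi]
          ring
        · intro h; exact absurd (Finset.mem_univ _) h
      rw [h2, detK n]
      rw [Finset.sum_range_succ (fun j => fibPoly j ^ 2) (n+2)]
      ring

/-- `d_2(0,t) = 1` and, for `n ≥ 1`, `d_2(n,t) = ∑_{j=0}^n F_j(t)^2`. -/
theorem hankel_det_motzkin_shift_two (n : ℕ) :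
    Matrix.det (Matrix.of fun i j : Fin 0 => motzkinPoly (2 + (i : ℕ) + (j : ℕ)) 0) = 1 ∧
    (1 ≤ n →
      Matrix.det (Matrix.of fun i j : Fin n => motzkinPoly (2 + (i : ℕ) + (j : ℕ)) 0) =
        ∑ j ∈ Finset.range (n + 1), fibPoly j ^ 2) := by
  constructor
  · exact Matrix.det_isEmpty
  · intro hn
    obtain ⟨m, rfl⟩ : ∃ m, n = m + 1 := ⟨n - 1, by omega⟩
    rw [detH m, detK m]
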